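/- Let B be a real m × n matrix, E and E' diagonal real m × m matrices, d ∈ ℝᵐ, ε ≥ 0, and Λ = diag(λⱼ) with 0 ≤ λⱼ ≤ 1. Suppose the matrix K_ε := BᵀEB + ε BᵀE'ΛB is invertible and that ε · ‖BᵀE'‖ · (max_j max(λⱼ, 1 − λⱼ)) · ‖B‖ · ‖K_ε⁻¹‖ < 1 (Euclidean operator norms). Then for every Y ∈ ℝⁿ the equilibrium equation BᵀEBu + ε BᵀE'(Bu + d)₋ = Y has a solution u* ∈ ℝⁿ, and the iteration K_ε u^{k+1} + ε BᵀE'Λ d = Y − ε BᵀE'[(Bu^k + d)₋ − Λ(Bu^k + d)] converges geometrically to u* from any starting point u⁰. -/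

import Mathlib

open Matrix Filter

/-- Euclidean (ℓ²) operator norm of a real matrix. -/
noncomputable def matrixL2OpNorm' {m n : ℕ} (A : Matrix (Fin m) (Fin n) ℝ) : ℝ :=
  ‖LinearMap.toContinuousLinearMap (Matrix.toEuclideanLin A)‖

/-- Euclidean norm of a vector of `ℝⁿ`. -/
noncomputable def eucNorm {n : ℕ} (v : Fin n → ℝ) : ℝ :=
  ‖(EuclideanSpace.equiv (Fin n) ℝ).symm v‖

lemma eucNorm_def {n : ℕ} (v : Fin n → ℝ) :
    eucNorm v = ‖(WithLp.equiv 2 (Fin n → ℝ)).symm v‖ := rfl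

lemma matrixL2OpNorm'_nonneg {m n : ℕ} (A : Matrix (Fin m) (Fin n) ℝ) :
    0 ≤ matrixL2OpNorm' A := norm_nonneg _

lemma eucNorm_nonneg {n : ℕ} (v : Fin n → ℝ) : 0 ≤ eucNorm v := norm_nonneg _

lemma eucNorm_mulVec_le {m n : ℕ} (A : Matrix (Fin m) (Fin n) ℝ) (x : Fin n → ℝ) :
    eucNorm (A.mulVec x) ≤ matrixL2OpNorm' A * eucNorm x := by
  rw [eucNorm_def, eucNorm_def, WithLp.equiv_symm_apply, WithLp.equiv_symm_apply, ← Matrix.toEuclideanLin_apply_piLp_toLp]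
  exact (LinearMap.toContinuousLinearMap (Matrix.toEuclideanLin A)).le_opNorm _

lemma eucNorm_smul {n : ℕ} (c : ℝ) (v : Fin n → ℝ) :
    eucNorm (c • v) = |c| * eucNorm v := by
  rw [eucNorm_def, eucNorm_def, WithLp.equiv_symm_apply, WithLp.toLp_smul, norm_smul, Real.norm_eq_abs]

lemma eucNorm_le_of_ptwise {n : ℕ} {v w : Fin n → ℝ} {c : ℝ} (hc : 0 ≤ c)
    (h : ∀ j, |v j| ≤ c * |w j|) : eucNorm v ≤ c * eucNorm w := by
  rw [eucNorm_def, eucNorm_def, EuclideanSpace.norm_eq, EuclideanSpace.norm_eq]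
  rw [← Real.sqrt_sq hc, ← Real.sqrt_mul (by positivity), Finset.mul_sum]
  apply Real.sqrt_le_sqrt
  apply Finset.sum_le_sum
  intro j _
  have hj := h j
  simp only [WithLp.equiv_symm_apply, PiLp.toLp_apply, Real.norm_eq_abs]
  calc |v j| ^ 2 ≤ (c * |w j|) ^ 2 := by
        apply pow_le_pow_left₀ (abs_nonneg _) hj
    _ = c ^ 2 * |w j| ^ 2 := by ring

lemma min_lip (l a b : ℝ) :
    |min a 0 - l * a - (min b 0 - l * b)| ≤ max l (1 - l) * |a - b| := by
  have hmin : ∀ x : ℝ, min x 0 = (x - |x|) / 2 := by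
    intro x
    rcases le_total x 0 with h | h
    · rw [min_eq_left h, abs_of_nonpos h]; ring
    · rw [min_eq_right h, abs_of_nonneg h]; ring
  have hmax : max l (1 - l) = |1/2 - l| + 1/2 := by
    rcases le_total l (1/2) with h | h
    · rw [abs_of_nonneg (by linarith), max_eq_right (by linarith)]; ring
    · rw [abs_of_nonpos (by linarith), max_eq_left (by linarith)]; ring
  have key : min a 0 - l * a - (min b 0 - l * b)
      = (1/2 - l) * (a - b) - (|a| - |b|) / 2 := by
    rw [hmin a, hmin b]; ring
  rw [key, hmax]
  have h1 : |(1/2 - l) * (a - b) - (|a| - |b|) / 2|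
      ≤ |(1/2 - l) * (a - b)| + |(|a| - |b|) / 2| := abs_sub _ _
  have h2 : |(1/2 - l) * (a - b)| = |1/2 - l| * |a - b| := abs_mul _ _
  have h3 : |(|a| - |b|) / 2| ≤ |a - b| / 2 := by
    rw [abs_div]
    have := abs_abs_sub_abs_le_abs_sub a b
    rw [abs_of_nonneg (by norm_num : (0:ℝ) ≤ 2)]
    linarith
  calc |(1/2 - l) * (a - b) - (|a| - |b|) / 2|
      ≤ |1/2 - l| * |a - b| + |a - b| / 2 := by rw [← h2]; linarith
    _ = (|1/2 - l| + 1/2) * |a - b| := by ring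

lemma abs_le_eucNorm {n : ℕ} (v : Fin n → ℝ) (i : Fin n) : |v i| ≤ eucNorm v := by
  rw [eucNorm_def, EuclideanSpace.norm_eq]
  have h1 : |v i| = Real.sqrt (|v i| ^ 2) := (Real.sqrt_sq (abs_nonneg _)).symm
  rw [h1]
  apply Real.sqrt_le_sqrt
  have h2 : |v i| ^ 2 = ‖((WithLp.equiv 2 (Fin n → ℝ)).symm v) i‖ ^ 2 := by
    simp [WithLp.equiv_symm_apply]
  rw [h2]
  exact Finset.single_le_sum (f := fun j => ‖((WithLp.equiv 2 (Fin n → ℝ)).symm v) j‖ ^ 2)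
    (fun j _ => by positivity) (Finset.mem_univ i)

/-- Static equilibrium with weak unilateral springs: if `K_ε = BᵀEB + εBᵀE'ΛB` is
invertible and `ε ‖BᵀE'‖ (max_j max(λⱼ,1−λⱼ)) ‖B‖ ‖K_ε⁻¹‖ < 1`, then for every load `Y`
the equation `BᵀEBu + εBᵀE'(Bu + d)₋ = Y` has a solution, and the quasi-Newton iteration
`K_ε u^{k+1} + εBᵀE'Λd = Y − εBᵀE'[(Bu^k + d)₋ − Λ(Bu^k + d)]` converges to it
geometrically from any starting point. Here `z₋ = min(z,0)` componentwise,
`E, E', Λ` are the diagonal matrices of the vectors `E, E', λ`. -/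
theorem stmt_3 {m n : ℕ} (B : Matrix (Fin m) (Fin n) ℝ) (E E' d lam : Fin m → ℝ)
    (ε : ℝ) (hε : 0 ≤ ε) (hlam : ∀ j, lam j ∈ Set.Icc (0:ℝ) 1)
    (Kε : Matrix (Fin n) (Fin n) ℝ)
    (hKdef : Kε = Bᵀ * Matrix.diagonal E * B
      + ε • (Bᵀ * Matrix.diagonal E' * Matrix.diagonal lam * B))
    (hKunit : IsUnit Kε)
    (hcontr : ε * matrixL2OpNorm' (Bᵀ * Matrix.diagonal E')
        * (⨆ j, max (lam j) (1 - lam j)) * matrixL2OpNorm' B * matrixL2OpNorm' Kε⁻¹ < 1) :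
    ∀ Y : Fin n → ℝ, ∃ ustar : Fin n → ℝ,
      ((Bᵀ * Matrix.diagonal E * B).mulVec ustar
        + ε • (Bᵀ * Matrix.diagonal E').mulVec
            (fun j => min ((B.mulVec ustar + d) j) 0) = Y) ∧
      ∀ u : ℕ → Fin n → ℝ,
        (∀ k : ℕ,
          Kε.mulVec (u (k + 1))
            + ε • (Bᵀ * Matrix.diagonal E').mulVec ((Matrix.diagonal lam).mulVec d)
          = Y - ε • (Bᵀ * Matrix.diagonal E').mulVec
              ((fun j => min ((B.mulVec (u k) + d) j) 0)
                - (Matrix.diagonal lam).mulVec (B.mulVec (u k) + d))) →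
        Tendsto u atTop (nhds ustar) ∧
        ∃ C : ℝ, 0 ≤ C ∧ ∃ q : ℝ, q ∈ Set.Ico (0:ℝ) 1 ∧
          ∀ k : ℕ, eucNorm (u k - ustar) ≤ C * q ^ k := by
  intro Y
  have hdet : IsUnit Kε.det := (Matrix.isUnit_iff_isUnit_det Kε).mp hKunit
  set N : Matrix (Fin n) (Fin m) ℝ := Bᵀ * Matrix.diagonal E' with hN
  set μ : ℝ := ⨆ j, max (lam j) (1 - lam j) with hμ
  set q : ℝ := ε * matrixL2OpNorm' N * μ * matrixL2OpNorm' B * matrixL2OpNorm' Kε⁻¹ with hq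
  have hμ0 : 0 ≤ μ := Real.iSup_nonneg fun j => le_max_of_le_left (hlam j).1
  have hq0 : 0 ≤ q := by
    have h1 := matrixL2OpNorm'_nonneg N
    have h2 := matrixL2OpNorm'_nonneg B
    have h3 := matrixL2OpNorm'_nonneg Kε⁻¹
    positivity
  have hq1 : q < 1 := hcontr
  -- the componentwise nonlinearity
  set φ : (Fin m → ℝ) → (Fin m → ℝ) :=
    fun v => (fun j => min (v j) 0) - (Matrix.diagonal lam).mulVec v with hφdef
  -- the iteration map
  set G : (Fin n → ℝ) → (Fin n → ℝ) := fun u =>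
    Kε⁻¹.mulVec (Y - ε • N.mulVec ((Matrix.diagonal lam).mulVec d)
      - ε • N.mulVec (φ (B.mulVec u + d))) with hGdef
  -- Lipschitz estimate for φ
  have hφ : ∀ v w : Fin m → ℝ, eucNorm (φ v - φ w) ≤ μ * eucNorm (v - w) := by
    intro v w
    apply eucNorm_le_of_ptwise hμ0
    intro j
    have hval : (φ v - φ w) j
        = min (v j) 0 - lam j * v j - (min (w j) 0 - lam j * w j) := by
      simp [hφdef, Matrix.mulVec_diagonal]
    rw [hval]
    have hmem : max (lam j) (1 - lam j) ≤ μ := by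
      apply le_ciSup (f := fun j => max (lam j) (1 - lam j))
      exact Set.Finite.bddAbove (Set.finite_range _)
    calc |min (v j) 0 - lam j * v j - (min (w j) 0 - lam j * w j)|
        ≤ max (lam j) (1 - lam j) * |v j - w j| := min_lip _ _ _
      _ ≤ μ * |v j - w j| := by
          apply mul_le_mul_of_nonneg_right hmem (abs_nonneg _)
      _ = μ * |(v - w) j| := by simp
  -- contraction estimate for G
  have hG : ∀ u v : Fin n → ℝ, eucNorm (G u - G v) ≤ q * eucNorm (u - v) := by
    intro u v
    have hsub : G u - G v
        = Kε⁻¹.mulVec (ε • (N.mulVec (φ (B.mulVec v + d) - φ (B.mulVec u + d)))) := by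
      simp only [hGdef, Matrix.mulVec_sub, Matrix.mulVec_smul, smul_sub]
      abel
    rw [hsub]
    have hB : B.mulVec v + d - (B.mulVec u + d) = B.mulVec (v - u) := by
      rw [Matrix.mulVec_sub]; abel
    have e1 : eucNorm (φ (B.mulVec v + d) - φ (B.mulVec u + d))
        ≤ μ * (matrixL2OpNorm' B * eucNorm (u - v)) := by
      calc eucNorm (φ (B.mulVec v + d) - φ (B.mulVec u + d))
          ≤ μ * eucNorm (B.mulVec v + d - (B.mulVec u + d)) := hφ _ _
        _ = μ * eucNorm (B.mulVec (v - u)) := by rw [hB]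
        _ ≤ μ * (matrixL2OpNorm' B * eucNorm (v - u)) := by
            apply mul_le_mul_of_nonneg_left (eucNorm_mulVec_le _ _) hμ0
        _ = μ * (matrixL2OpNorm' B * eucNorm (u - v)) := by
            congr 2
            have : v - u = (-1 : ℝ) • (u - v) := by module
            rw [this, eucNorm_smul]; simp
    have e2 : eucNorm (ε • N.mulVec (φ (B.mulVec v + d) - φ (B.mulVec u + d)))
        ≤ ε * (matrixL2OpNorm' N * (μ * (matrixL2OpNorm' B * eucNorm (u - v)))) := by
      rw [eucNorm_smul, abs_of_nonneg hε]
      apply mul_le_mul_of_nonneg_left _ hε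
      calc eucNorm (N.mulVec (φ (B.mulVec v + d) - φ (B.mulVec u + d)))
          ≤ matrixL2OpNorm' N * eucNorm (φ (B.mulVec v + d) - φ (B.mulVec u + d)) :=
            eucNorm_mulVec_le _ _
        _ ≤ matrixL2OpNorm' N * (μ * (matrixL2OpNorm' B * eucNorm (u - v))) := by
            apply mul_le_mul_of_nonneg_left e1 (matrixL2OpNorm'_nonneg N)
    calc eucNorm (Kε⁻¹.mulVec (ε • N.mulVec (φ (B.mulVec v + d) - φ (B.mulVec u + d))))
        ≤ matrixL2OpNorm' Kε⁻¹
            * eucNorm (ε • N.mulVec (φ (B.mulVec v + d) - φ (B.mulVec u + d))) :=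
          eucNorm_mulVec_le _ _
      _ ≤ matrixL2OpNorm' Kε⁻¹
            * (ε * (matrixL2OpNorm' N * (μ * (matrixL2OpNorm' B * eucNorm (u - v))))) := by
          apply mul_le_mul_of_nonneg_left e2 (matrixL2OpNorm'_nonneg _)
      _ = q * eucNorm (u - v) := by rw [hq]; ring
  -- Banach fixed point on EuclideanSpace
  set g : EuclideanSpace ℝ (Fin n) → EuclideanSpace ℝ (Fin n) :=
    fun x => (WithLp.equiv 2 (Fin n → ℝ)).symm (G ((WithLp.equiv 2 (Fin n → ℝ)) x)) with hgdef
  have hdistg : ∀ x y : EuclideanSpace ℝ (Fin n),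
      dist (g x) (g y) = eucNorm (G ((WithLp.equiv 2 (Fin n → ℝ)) x)
        - G ((WithLp.equiv 2 (Fin n → ℝ)) y)) := by
    intro x y
    rw [dist_eq_norm, hgdef, eucNorm_def, WithLp.equiv_symm_apply, WithLp.toLp_sub]
  have hdistxy : ∀ x y : EuclideanSpace ℝ (Fin n),
      dist x y = eucNorm ((WithLp.equiv 2 (Fin n → ℝ)) x - (WithLp.equiv 2 (Fin n → ℝ)) y) := by
    intro x y
    rw [dist_eq_norm, eucNorm_def, WithLp.equiv_symm_apply, WithLp.toLp_sub]
    simp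
  have hlip : LipschitzWith ⟨q, hq0⟩ g := by
    apply LipschitzWith.of_dist_le_mul
    intro x y
    rw [hdistg, hdistxy]
    exact hG _ _
  have hcw : ContractingWith ⟨q, hq0⟩ g := ⟨by exact_mod_cast hq1, hlip⟩
  set xstar : EuclideanSpace ℝ (Fin n) := ContractingWith.fixedPoint g hcw with hxs
  have hfix : g xstar = xstar := ContractingWith.fixedPoint_isFixedPt hcw
  set ustar : Fin n → ℝ := (WithLp.equiv 2 (Fin n → ℝ)) xstar with hus
  have hGfix : G ustar = ustar := by
    have := congrArg (WithLp.equiv 2 (Fin n → ℝ)) hfix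
    simpa [hgdef, hus] using this
  -- equilibrium equation for ustar
  have hKu : Kε.mulVec ustar = Y - ε • N.mulVec ((Matrix.diagonal lam).mulVec d)
      - ε • N.mulVec (φ (B.mulVec ustar + d)) := by
    conv_lhs => rw [← hGfix]
    simp only [hGdef]
    rw [Matrix.mulVec_mulVec, Matrix.mul_nonsing_inv Kε hdet, Matrix.one_mulVec]
  have hequil : (Bᵀ * Matrix.diagonal E * B).mulVec ustar
      + ε • (Bᵀ * Matrix.diagonal E').mulVec
          (fun j => min ((B.mulVec ustar + d) j) 0) = Y := by
    have h1 : (Bᵀ * Matrix.diagonal E * B).mulVec ustar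
        = Kε.mulVec ustar - ε • N.mulVec ((Matrix.diagonal lam).mulVec (B.mulVec ustar)) := by
      rw [hKdef, Matrix.add_mulVec, Matrix.smul_mulVec]
      rw [show (N * Matrix.diagonal lam * B).mulVec ustar
          = N.mulVec ((Matrix.diagonal lam).mulVec (B.mulVec ustar)) by
        rw [Matrix.mulVec_mulVec, Matrix.mulVec_mulVec]]
      abel
    rw [← hN, h1, hKu, hφdef]
    simp only [Matrix.mulVec_sub, Matrix.mulVec_add, smul_sub, smul_add]
    abel
  refine ⟨ustar, hequil, ?_⟩
  intro u hu
  -- iteration coincides with G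
  have hstep : ∀ k, u (k + 1) = G (u k) := by
    intro k
    have h := hu k
    have h2 : Kε.mulVec (u (k + 1))
        = Y - ε • N.mulVec ((Matrix.diagonal lam).mulVec d)
          - ε • N.mulVec (φ (B.mulVec (u k) + d)) := by
      rw [hφdef]
      have := eq_sub_of_add_eq h
      rw [this]
      abel
    simp only [hGdef]
    rw [← h2, Matrix.mulVec_mulVec, Matrix.nonsing_inv_mul Kε hdet, Matrix.one_mulVec]
  -- geometric decay
  have hdecay : ∀ k, eucNorm (u k - ustar) ≤ eucNorm (u 0 - ustar) * q ^ k := by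
    intro k
    induction k with
    | zero => simp
    | succ k ih =>
      have : eucNorm (u (k + 1) - ustar) ≤ q * eucNorm (u k - ustar) := by
        rw [hstep k]
        conv_lhs => rw [← hGfix]
        exact hG _ _
      calc eucNorm (u (k + 1) - ustar) ≤ q * eucNorm (u k - ustar) := this
        _ ≤ q * (eucNorm (u 0 - ustar) * q ^ k) := mul_le_mul_of_nonneg_left ih hq0
        _ = eucNorm (u 0 - ustar) * q ^ (k + 1) := by ring
  have hC0 : 0 ≤ eucNorm (u 0 - ustar) := eucNorm_nonneg _
  have htendzero : Tendsto (fun k => eucNorm (u 0 - ustar) * q ^ k) atTop (nhds 0) := by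
    have := tendsto_pow_atTop_nhds_zero_of_lt_one hq0 hq1
    simpa using this.const_mul (eucNorm (u 0 - ustar))
  have htends : Tendsto u atTop (nhds ustar) := by
    rw [tendsto_pi_nhds]
    intro i
    rw [tendsto_iff_dist_tendsto_zero]
    apply squeeze_zero (fun k => dist_nonneg) _ htendzero
    intro k
    calc dist (u k i) (ustar i) = |(u k - ustar) i| := by
          rw [Real.dist_eq]; simp
      _ ≤ eucNorm (u k - ustar) := abs_le_eucNorm _ _
      _ ≤ eucNorm (u 0 - ustar) * q ^ k := hdecay k
  exact ⟨htends, eucNorm (u 0 - ustar), hC0, q, ⟨hq0, hq1⟩, hdecay⟩
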